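/- Let S be the sum of N i.i.d. half-normal random variables with density √(2/π)e^{−z²/2} on (0,∞). Then the density f_S of S satisfies s^{−(N−1)} f_S(s) → (2/π)^{N/2}/(N−1)! as s → 0⁺. -/

import Mathlib

open Real MeasureTheory ProbabilityTheory Filter
open scoped ENNReal

noncomputable def halfNormal : Measure ℝ :=
  volume.withDensity (fun z => ENNReal.ofReal
    (if 0 < z then Real.sqrt (2 / Real.pi) * Real.exp (-z ^ 2 / 2) else 0))

noncomputable def phi0 (s : ℝ) : ℝ := Real.sqrt (2 / Real.pi) * Real.exp (-s ^ 2 / 2)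

noncomputable def Hfun : ℕ → ℝ → ℝ
  | 0 => phi0
  | (k+1) => fun s => ∫ u in (0:ℝ)..1, u ^ k * Hfun k (s * u) * phi0 (s * (1 - u))

lemma sqpi_pos : 0 < Real.sqrt (2 / Real.pi) :=
  Real.sqrt_pos.2 (by positivity)

lemma phi0_pos (s : ℝ) : 0 < phi0 s := mul_pos sqpi_pos (Real.exp_pos _)

lemma phi0_le (s : ℝ) : phi0 s ≤ Real.sqrt (2 / Real.pi) := by
  have h : Real.exp (-s ^ 2 / 2) ≤ 1 := by
    rw [Real.exp_le_one_iff]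
    nlinarith [sq_nonneg s]
  calc phi0 s ≤ Real.sqrt (2/Real.pi) * 1 := mul_le_mul_of_nonneg_left h sqpi_pos.le
  _ = _ := mul_one _

lemma phi0_cont : Continuous phi0 := by
  unfold phi0; fun_prop

lemma Hfun_props (k : ℕ) : Continuous (Hfun k) ∧
    ∀ s, 0 < Hfun k s ∧ Hfun k s ≤ Real.sqrt (2/Real.pi)^(k+1) / (Nat.factorial k) := by
  induction k with
  | zero =>
    refine ⟨phi0_cont, fun s => ⟨phi0_pos s, ?_⟩⟩
    show phi0 s ≤ _
    simpa using phi0_le s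
  | succ k ih =>
    obtain ⟨hc, hb⟩ := ih
    set B : ℝ := Real.sqrt (2/Real.pi)^(k+1) / (Nat.factorial k) with hB
    have hBpos : 0 < B := lt_of_lt_of_le (hb 0).1 (hb 0).2
    have hcontu : ∀ s : ℝ, Continuous fun u : ℝ => u ^ k * Hfun k (s * u) * phi0 (s * (1 - u)) := by
      intro s
      exact ((continuous_pow k).mul (hc.comp (continuous_const.mul continuous_id))).mul
        (phi0_cont.comp (continuous_const.mul (continuous_const.sub continuous_id)))
    have hbd : ∀ s u : ℝ, 0 ≤ u → u ≤ 1 →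
        u ^ k * Hfun k (s * u) * phi0 (s * (1 - u)) ≤ u ^ k * (B * Real.sqrt (2/Real.pi)) := by
      intro s u hu0 hu1
      rw [mul_assoc]
      exact mul_le_mul_of_nonneg_left
        (mul_le_mul (hb _).2 (phi0_le _) (phi0_pos _).le hBpos.le) (pow_nonneg hu0 k)
    have heq : ∀ s : ℝ, Hfun (k+1) s = ∫ u in (0:ℝ)..1, u ^ k * Hfun k (s * u) * phi0 (s * (1 - u)) := fun _ => rfl
    have hcont : Continuous (Hfun (k+1)) := by
      rw [show Hfun (k+1) = fun s => ∫ u in (0:ℝ)..1, u ^ k * Hfun k (s * u) * phi0 (s * (1 - u)) from rfl]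
      apply intervalIntegral.continuous_of_dominated_interval (bound := fun _ => B * Real.sqrt (2/Real.pi))
      · exact fun s => ((hcontu s).aestronglyMeasurable)
      · intro s
        filter_upwards with u hu
        rw [Set.uIoc_of_le zero_le_one] at hu
        have h1 : 0 ≤ u ^ k * Hfun k (s*u) * phi0 (s*(1-u)) :=
          mul_nonneg (mul_nonneg (pow_nonneg hu.1.le k) (hb _).1.le) (phi0_pos _).le
        rw [Real.norm_eq_abs, abs_of_nonneg h1]
        calc u ^ k * Hfun k (s*u) * phi0 (s*(1-u)) ≤ u ^ k * (B * Real.sqrt (2/Real.pi)) :=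
              hbd s u hu.1.le hu.2
          _ ≤ 1 * (B * Real.sqrt (2/Real.pi)) := by
              apply mul_le_mul_of_nonneg_right (pow_le_one₀ hu.1.le hu.2)
              positivity
          _ = B * Real.sqrt (2/Real.pi) := one_mul _
      · exact intervalIntegrable_const
      · filter_upwards with u _
        exact ((continuous_const.mul (hc.comp (continuous_id.mul continuous_const))).mul
          (phi0_cont.comp (continuous_id.mul continuous_const)))
    refine ⟨hcont, fun s => ⟨?_, ?_⟩⟩
    · rw [heq]
      apply intervalIntegral.intervalIntegral_pos_of_pos_on ((hcontu s).intervalIntegrable _ _)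
      · intro u hu
        exact mul_pos (mul_pos (pow_pos hu.1 k) (hb _).1) (phi0_pos _)
      · exact zero_lt_one
    · rw [heq]
      have hmono : ∫ u in (0:ℝ)..1, u ^ k * Hfun k (s * u) * phi0 (s * (1 - u))
          ≤ ∫ u in (0:ℝ)..1, u ^ k * (B * Real.sqrt (2/Real.pi)) := by
        apply intervalIntegral.integral_mono_on zero_le_one ((hcontu s).intervalIntegrable _ _)
          (((continuous_pow k).mul continuous_const).intervalIntegrable _ _)
        intro u hu
        exact hbd s u hu.1 hu.2
      refine hmono.trans (le_of_eq ?_)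
      rw [intervalIntegral.integral_mul_const, integral_pow, hB]
      have hfac : (Nat.factorial (k+1) : ℝ) = ((k:ℝ)+1) * Nat.factorial k := by
        rw [Nat.factorial_succ]; push_cast; ring
      have hkf : (0:ℝ) < Nat.factorial k := by positivity
      rw [hfac]
      have hk1 : ((k:ℝ)+1) ≠ 0 := by positivity
      field_simp
      ring


lemma Hfun_zero (k : ℕ) : Hfun k 0 = Real.sqrt (2/Real.pi)^(k+1) / (Nat.factorial k) := by
  induction k with
  | zero => simp [Hfun, phi0]
  | succ k ih =>
    have h : Hfun (k+1) 0 = ∫ u in (0:ℝ)..1, u ^ k * (Hfun k 0 * phi0 0) := by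
      show (∫ u in (0:ℝ)..1, u ^ k * Hfun k (0 * u) * phi0 (0 * (1 - u))) = _
      congr 1
      funext u
      rw [zero_mul, zero_mul, mul_assoc]
    rw [h, intervalIntegral.integral_mul_const, integral_pow, ih]
    have hphi : phi0 0 = Real.sqrt (2/Real.pi) := by simp [phi0]
    rw [hphi]
    have hfac : (Nat.factorial (k+1) : ℝ) = ((k:ℝ)+1) * Nat.factorial k := by
      rw [Nat.factorial_succ]; push_cast; ring
    have hkf : (0:ℝ) < Nat.factorial k := by positivity
    rw [hfac]
    field_simp
    ring

noncomputable def dNfun (k : ℕ) (x : ℝ) : ℝ := if 0 < x then x ^ k * Hfun k x else 0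

lemma dNfun_nonneg (k : ℕ) (x : ℝ) : 0 ≤ dNfun k x := by
  unfold dNfun
  split
  · exact mul_nonneg (pow_nonneg (by linarith) k) ((Hfun_props k).2 x).1.le
  · exact le_rfl

lemma dNfun_meas (k : ℕ) : Measurable (dNfun k) := by
  unfold dNfun
  exact Measurable.ite measurableSet_Ioi
    ((measurable_id.pow_const k).mul (Hfun_props k).1.measurable)
    measurable_const

lemma dNfun0_le (t : ℝ) : dNfun 0 t ≤ Real.sqrt (2/Real.pi) := by
  unfold dNfun
  split
  · show t ^ 0 * Hfun 0 t ≤ _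
    rw [pow_zero, one_mul]
    exact phi0_le t
  · exact sqpi_pos.le

lemma dNfun_le (k : ℕ) {c t : ℝ} (hc : 0 ≤ c) (ht : t ≤ c) :
    dNfun k t ≤ c ^ k * (Real.sqrt (2/Real.pi)^(k+1) / (Nat.factorial k)) := by
  have hpos : 0 ≤ c ^ k * (Real.sqrt (2/Real.pi)^(k+1) / (Nat.factorial k)) := by positivity
  unfold dNfun
  split
  · next h =>
    exact mul_le_mul (pow_le_pow_left₀ h.le ht k) ((Hfun_props k).2 t).2
      ((Hfun_props k).2 t).1.le (by positivity)
  · exact hpos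

lemma conv_real (k : ℕ) (x : ℝ) :
    (∫ t, dNfun 0 t * dNfun k (x - t)) = dNfun (k+1) x := by
  rcases le_or_gt x 0 with hx | hx
  · have h0 : ∀ t, dNfun 0 t * dNfun k (x - t) = 0 := by
      intro t
      rcases le_or_gt t 0 with ht | ht
      · rw [show dNfun 0 t = 0 from if_neg (not_lt.2 ht), zero_mul]
      · rw [show dNfun k (x - t) = 0 from if_neg (by simp; linarith), mul_zero]
    simp only [h0]
    rw [integral_zero, dNfun, if_neg (not_lt.2 hx)]
  · have hsupp : ∀ t, t ∉ Set.Ioo 0 x → dNfun 0 t * dNfun k (x - t) = 0 := by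
      intro t ht
      rcases le_or_gt t 0 with h | h
      · rw [show dNfun 0 t = 0 from if_neg (not_lt.2 h), zero_mul]
      · have hxt : x ≤ t := by
          by_contra hcon
          exact ht ⟨h, lt_of_not_ge hcon⟩
        rw [show dNfun k (x - t) = 0 from if_neg (by simp; linarith), mul_zero]
    rw [← setIntegral_eq_integral_of_forall_compl_eq_zero hsupp]
    rw [← integral_Ioc_eq_integral_Ioo, ← intervalIntegral.integral_of_le hx.le]
    have hvar : (x • ∫ u in (0:ℝ)..1, dNfun 0 (x*u) * dNfun k (x - x*u))
        = ∫ t in (0:ℝ)..x, dNfun 0 t * dNfun k (x - t) := by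
      have := intervalIntegral.smul_integral_comp_mul_left (a := 0) (b := 1)
        (fun t => dNfun 0 t * dNfun k (x - t)) x
      simpa using this
    rw [← hvar]
    have key : (∫ u in (0:ℝ)..1, dNfun 0 (x*u) * dNfun k (x - x*u))
        = x^k * Hfun (k+1) x := by
      have hcong : ∀ u ∈ Set.Ioo (0:ℝ) 1, dNfun 0 (x*u) * dNfun k (x - x*u)
          = x^k * ((fun v => v ^ k * Hfun k (x * v) * phi0 (x * (1 - v))) (1-u)) := by
        intro u hu
        have h1 : 0 < x*u := mul_pos hx hu.1
        have h2 : 0 < x - x*u := by nlinarith [hu.2]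
        have h3 : x - x*u = x*(1-u) := by ring
        have e0 : dNfun 0 (x*u) = phi0 (x*u) := by
          rw [dNfun, if_pos h1]
          show (x*u) ^ 0 * Hfun 0 (x*u) = _
          rw [pow_zero, one_mul]; rfl
        rw [e0, dNfun, h3, if_pos (h3 ▸ h2)]
        simp only [sub_sub_cancel]
        rw [mul_pow]
        ring
      rw [intervalIntegral.integral_of_le zero_le_one, integral_Ioc_eq_integral_Ioo,
        setIntegral_congr_fun measurableSet_Ioo hcong, ← integral_Ioc_eq_integral_Ioo,
        ← intervalIntegral.integral_of_le zero_le_one]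
      rw [intervalIntegral.integral_const_mul]
      congr 1
      rw [intervalIntegral.integral_comp_sub_left
        (fun v => v ^ k * Hfun k (x * v) * phi0 (x * (1 - v))) 1]
      norm_num
      rfl
    rw [key, smul_eq_mul, dNfun, if_pos hx, pow_succ]
    ring


lemma conv_meas (k : ℕ) (x : ℝ) : Measurable (fun t => dNfun 0 t * dNfun k (x - t)) :=
  (dNfun_meas 0).mul ((dNfun_meas k).comp (measurable_const.sub measurable_id))

lemma conv_integrable (k : ℕ) (x : ℝ) :
    Integrable (fun t => dNfun 0 t * dNfun k (x - t)) := by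
  rcases le_or_gt x 0 with hx | hx
  · have h0 : ∀ t, dNfun 0 t * dNfun k (x - t) = 0 := by
      intro t
      rcases le_or_gt t 0 with ht | ht
      · rw [show dNfun 0 t = 0 from if_neg (not_lt.2 ht), zero_mul]
      · rw [show dNfun k (x - t) = 0 from if_neg (by simp; linarith), mul_zero]
    simp only [h0]
    exact integrable_zero _ _ _
  · have hsupp : ∀ t, t ∉ Set.Ioo 0 x → dNfun 0 t * dNfun k (x - t) = 0 := by
      intro t ht
      rcases le_or_gt t 0 with h | h
      · rw [show dNfun 0 t = 0 from if_neg (not_lt.2 h), zero_mul]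
      · have hxt : x ≤ t := by
          by_contra hcon
          exact ht ⟨h, lt_of_not_ge hcon⟩
        rw [show dNfun k (x - t) = 0 from if_neg (by simp; linarith), mul_zero]
    have hind : (fun t => dNfun 0 t * dNfun k (x - t))
        = Set.indicator (Set.Ioo 0 x) (fun t => dNfun 0 t * dNfun k (x - t)) := by
      funext t
      by_cases ht : t ∈ Set.Ioo 0 x
      · rw [Set.indicator_of_mem ht]
      · rw [Set.indicator_of_notMem ht, hsupp t ht]
    rw [hind, integrable_indicator_iff measurableSet_Ioo]
    set C : ℝ := Real.sqrt (2/Real.pi) * (x ^ k * (Real.sqrt (2/Real.pi)^(k+1) / (Nat.factorial k)))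
    refine Integrable.mono' (g := fun _ => C) ?_ (conv_meas k x).aestronglyMeasurable ?_
    · exact integrableOn_const (by rw [Real.volume_Ioo]; exact ENNReal.ofReal_ne_top)
    · rw [ae_restrict_iff' measurableSet_Ioo]
      filter_upwards with t ht
      rw [Real.norm_eq_abs, abs_of_nonneg (mul_nonneg (dNfun_nonneg _ _) (dNfun_nonneg _ _))]
      exact mul_le_mul (dNfun0_le t) (dNfun_le k hx.le (by linarith [ht.1]))
        (dNfun_nonneg _ _) sqpi_pos.le

lemma conv_lintegral (k : ℕ) (x : ℝ) :
    (∫⁻ t, ENNReal.ofReal (dNfun 0 t) * ENNReal.ofReal (dNfun k (x - t)))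
      = ENNReal.ofReal (dNfun (k+1) x) := by
  have h1 : ∀ t, ENNReal.ofReal (dNfun 0 t) * ENNReal.ofReal (dNfun k (x - t))
      = ENNReal.ofReal (dNfun 0 t * dNfun k (x - t)) :=
    fun t => (ENNReal.ofReal_mul (dNfun_nonneg 0 t)).symm
  simp_rw [h1]
  rw [← ofReal_integral_eq_lintegral_ofReal (conv_integrable k x)
    (Filter.Eventually.of_forall fun t => mul_nonneg (dNfun_nonneg _ _) (dNfun_nonneg _ _)),
    conv_real]


lemma map_add_indep {Ω : Type*} [MeasureSpace Ω] [IsProbabilityMeasure (ℙ : Measure Ω)]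
    {X Y : Ω → ℝ} (hX : Measurable X) (hY : Measurable Y) (hind : IndepFun X Y ℙ)
    {f g : ℝ → ℝ≥0∞} (hf : Measurable f) (hg : Measurable g)
    (hmX : Measure.map X ℙ = volume.withDensity f)
    (hmY : Measure.map Y ℙ = volume.withDensity g) :
    Measure.map (fun ω => X ω + Y ω) ℙ
      = volume.withDensity (fun x => ∫⁻ t, f t * g (x - t)) := by
  have hpair : Measure.map (fun ω => (X ω, Y ω)) ℙ
      = (volume.withDensity f).prod (volume.withDensity g) := by
    rw [← hmX, ← hmY]
    exact (indepFun_iff_map_prod_eq_prod_map_map hX.aemeasurable hY.aemeasurable).1 hind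
  have hcomp : (fun ω => X ω + Y ω)
      = (fun p : ℝ × ℝ => p.1 + p.2) ∘ (fun ω => (X ω, Y ω)) := rfl
  rw [hcomp, ← Measure.map_map measurable_add (hX.prodMk hY), hpair]
  -- core identity
  have hker : Measurable fun p : ℝ × ℝ => f p.2 * g (p.1 - p.2) :=
    (hf.comp measurable_snd).mul (hg.comp (measurable_fst.sub measurable_snd))
  have hconv_meas : Measurable fun x : ℝ => ∫⁻ t, f t * g (x - t) :=
    Measurable.lintegral_prod_right' hker
  ext A hA
  rw [Measure.map_apply measurable_add hA, withDensity_apply _ hA]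
  have hpre : MeasurableSet ((fun p : ℝ × ℝ => p.1 + p.2) ⁻¹' A) := measurable_add hA
  rw [Measure.prod_apply hpre]
  set idA : ℝ → ℝ≥0∞ := A.indicator 1 with hidA
  have hidA_meas : Measurable idA := measurable_one.indicator hA
  have hslice : ∀ s : ℝ, (volume.withDensity g)
      (Prod.mk s ⁻¹' ((fun p : ℝ × ℝ => p.1 + p.2) ⁻¹' A))
      = ∫⁻ u, idA u * g (u - s) := by
    intro s
    have hset : (Prod.mk s ⁻¹' ((fun p : ℝ × ℝ => p.1 + p.2) ⁻¹' A)) = {t | s + t ∈ A} := rfl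
    have hsm : MeasurableSet {t : ℝ | s + t ∈ A} := (measurable_const_add s) hA
    rw [hset, withDensity_apply _ hsm, ← lintegral_indicator hsm]
    have hptw : ∀ t : ℝ, Set.indicator {t : ℝ | s + t ∈ A} g t = idA (t + s) * g ((t + s) - s) := by
      intro t
      have h2 : t + s - s = t := by ring
      simp only [hidA, Set.indicator, h2, Set.mem_setOf_eq, Pi.one_apply]
      by_cases ht : s + t ∈ A
      · rw [if_pos (show t ∈ {t : ℝ | s + t ∈ A} from ht), if_pos (show t + s ∈ A by rwa [add_comm s t] at ht), one_mul]
      · rw [if_neg (show t ∉ {t : ℝ | s + t ∈ A} from ht), if_neg (fun hh => ht (show s + t ∈ A by rwa [add_comm t s] at hh)), zero_mul]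
    simp_rw [hptw]
    exact (measurePreserving_add_right volume s).lintegral_comp
      (hidA_meas.mul (hg.comp (measurable_id.sub measurable_const)))
  simp_rw [hslice]
  have hker2 : Measurable fun p : ℝ × ℝ => idA p.2 * g (p.2 - p.1) :=
    (hidA_meas.comp measurable_snd).mul (hg.comp (measurable_snd.sub measurable_fst))
  rw [lintegral_withDensity_eq_lintegral_mul _ hf (Measurable.lintegral_prod_right' hker2)]
  have hstep : ∀ s : ℝ, (f * fun s => ∫⁻ u, idA u * g (u - s)) s
      = ∫⁻ u, f s * (idA u * g (u - s)) := by
    intro s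
    rw [Pi.mul_apply]
    have hms : Measurable fun u : ℝ => idA u * g (u - s) :=
      hidA_meas.mul (hg.comp (measurable_id.sub measurable_const))
    exact (lintegral_const_mul (f s) hms).symm
  simp_rw [hstep]
  rw [lintegral_lintegral_swap]
  · have hinner : ∀ u : ℝ, (∫⁻ s, f s * (idA u * g (u - s))) = idA u * ∫⁻ s, f s * g (u - s) := by
      intro u
      have hmg : Measurable fun s : ℝ => f s * g (u - s) :=
        hf.mul (hg.comp (measurable_const.sub measurable_id))
      rw [← lintegral_const_mul (idA u) hmg]
      congr 1
      funext s
      ring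
    simp_rw [hinner]
    rw [← lintegral_indicator hA]
    congr 1
    funext u
    by_cases hu : u ∈ A
    · rw [Set.indicator_of_mem hu, hidA, Set.indicator_of_mem hu]
      simp
    · rw [Set.indicator_of_notMem hu, hidA, Set.indicator_of_notMem hu]
      simp
  · apply Measurable.aemeasurable
    exact (hf.comp measurable_fst).mul ((hidA_meas.comp measurable_snd).mul
      (hg.comp (measurable_snd.sub measurable_fst)))


lemma halfNormal_eq : halfNormal
    = volume.withDensity (fun x => ENNReal.ofReal (dNfun 0 x)) := by
  unfold halfNormal
  congr 1
  funext z
  congr 1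
  unfold dNfun
  split
  · show _ = z ^ 0 * Hfun 0 z
    rw [pow_zero, one_mul]; rfl
  · rfl

lemma law_sum {Ω : Type*} [MeasureSpace Ω] [IsProbabilityMeasure (ℙ : Measure Ω)]
    {N : ℕ} (Z : Fin N → Ω → ℝ) (hmeas : ∀ i, Measurable (Z i))
    (hindep : iIndepFun Z ℙ)
    (hlaw : ∀ i, Measure.map (Z i) ℙ = halfNormal) (s : Finset (Fin N)) (hs : s.Nonempty) :
    Measure.map (fun ω => ∑ i ∈ s, Z i ω) ℙ
      = volume.withDensity (fun x => ENNReal.ofReal (dNfun (s.card - 1) x)) := by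
  classical
  induction s using Finset.cons_induction with
  | empty => simp at hs
  | cons i t hi ih =>
    rcases t.eq_empty_or_nonempty with rfl | ht
    · simp only [Finset.cons_empty, Finset.sum_singleton, Finset.card_singleton]
      rw [hlaw i, halfNormal_eq]
    · have hsum_meas : Measurable (fun ω => ∑ j ∈ t, Z j ω) :=
        Finset.measurable_sum _ (fun j _ => hmeas j)
      have hind : IndepFun (Z i) (fun ω => ∑ j ∈ t, Z j ω) ℙ := by
        have h := (hindep.indepFun_finsetSum_of_notMem hmeas hi).symm
        have he : (∑ j ∈ t, Z j) = fun ω => ∑ j ∈ t, Z j ω := by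
          funext ω; simp [Finset.sum_apply]
        rwa [he] at h
      have hrec := ih ht
      have hm0 : Measurable fun x => ENNReal.ofReal (dNfun 0 x) :=
        ENNReal.measurable_ofReal.comp (dNfun_meas 0)
      have hmt : Measurable fun x => ENNReal.ofReal (dNfun (t.card - 1) x) :=
        ENNReal.measurable_ofReal.comp (dNfun_meas (t.card - 1))
      have hmap := map_add_indep (hmeas i) hsum_meas hind hm0 hmt
        (by rw [hlaw i, halfNormal_eq]) hrec
      have hfuneq : (fun ω => ∑ j ∈ Finset.cons i t hi, Z j ω)
          = fun ω => Z i ω + ∑ j ∈ t, Z j ω := by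
        funext ω; rw [Finset.sum_cons]
      rw [hfuneq, hmap]
      congr 1
      funext x
      have h1 : (∫⁻ u, ENNReal.ofReal (dNfun 0 u)
          * ENNReal.ofReal (dNfun (t.card - 1) (x - u)))
          = ENNReal.ofReal (dNfun (t.card - 1 + 1) x) := conv_lintegral (t.card - 1) x
      have h2 : t.card - 1 + 1 = t.card := Nat.succ_pred_eq_of_pos (Finset.card_pos.2 ht)
      have h3 : (Finset.cons i t hi).card - 1 = t.card := by
        rw [Finset.card_cons]; omega
      rw [h3, ← h2, ← h1]
      rfl

/-- If S is the sum of N i.i.d. half-normal random variables with density f_S, then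
s^{−(N−1)} f_S(s) → (2/π)^{N/2}/(N−1)! as s → 0⁺. -/
theorem density_of_S_near_zero
    {Ω : Type*} [MeasureSpace Ω] [IsProbabilityMeasure (ℙ : Measure Ω)]
    (N : ℕ) (hN : 1 ≤ N) (Z : Fin N → Ω → ℝ)
    (hmeas : ∀ i, Measurable (Z i))
    (hindep : iIndepFun Z ℙ)
    (hlaw : ∀ i, Measure.map (Z i) ℙ = halfNormal)
    (fS : ℝ → ℝ) (hfS_cont : ContinuousOn fS (Set.Ioi 0))
    (hfS : Measure.map (fun ω => ∑ i, Z i ω) ℙ =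
      volume.withDensity (fun s => ENNReal.ofReal (if 0 < s then fS s else 0))) :
    Tendsto (fun s : ℝ => fS s / s ^ ((N : ℝ) - 1))
      (nhdsWithin 0 (Set.Ioi 0))
      (nhds ((2 / Real.pi) ^ ((N : ℝ) / 2) / (Nat.factorial (N - 1) : ℝ))) := by
  obtain ⟨k, rfl⟩ : ∃ k, N = k + 1 := ⟨N - 1, (Nat.succ_pred_eq_of_pos hN).symm⟩
  have hsum_meas : Measurable (fun ω => ∑ i, Z i ω) :=
    Finset.measurable_sum _ (fun j _ => hmeas j)
  have hlawS := law_sum Z hmeas hindep hlaw Finset.univ Finset.univ_nonempty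
  have hcard : (Finset.univ : Finset (Fin (k+1))).card - 1 = k := by simp
  rw [hcard] at hlawS
  have hprob : IsProbabilityMeasure (Measure.map (fun ω => ∑ i, Z i ω) ℙ) :=
    Measure.isProbabilityMeasure_map hsum_meas.aemeasurable
  have hmeas_lhs : AEMeasurable (fun s : ℝ => ENNReal.ofReal (if 0 < s then fS s else 0)) volume := by
    have h1 : (fun s : ℝ => ENNReal.ofReal (if 0 < s then fS s else 0))
        = Set.indicator (Set.Ioi 0) (fun s => ENNReal.ofReal (fS s)) := by
      funext s
      by_cases hs : 0 < s
      · rw [if_pos hs, Set.indicator_of_mem (Set.mem_Ioi.2 hs)]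
      · rw [if_neg hs, Set.indicator_of_notMem (by simpa using hs)]
        simp
    rw [h1, aemeasurable_indicator_iff measurableSet_Ioi]
    exact ENNReal.measurable_ofReal.comp_aemeasurable (hfS_cont.aemeasurable measurableSet_Ioi)
  have hfin : ∫⁻ x, ENNReal.ofReal (if 0 < x then fS x else 0) ∂volume ≠ ⊤ := by
    have h0 : volume.withDensity (fun s : ℝ => ENNReal.ofReal (if 0 < s then fS s else 0)) Set.univ = 1 := by
      rw [← hfS]
      exact measure_univ
    rw [withDensity_apply _ MeasurableSet.univ, setLIntegral_univ] at h0
    rw [h0]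
    exact ENNReal.one_ne_top
  have haeq : (fun s : ℝ => ENNReal.ofReal (if 0 < s then fS s else 0)) =ᵐ[volume]
      (fun x => ENNReal.ofReal (dNfun k x)) := by
    have hDk_meas : Measurable fun x => ENNReal.ofReal (dNfun k x) :=
      ENNReal.measurable_ofReal.comp (dNfun_meas k)
    rw [← withDensity_eq_iff hmeas_lhs hDk_meas.aemeasurable hfin]
    rw [← hfS, hlawS]
  have hae2 : ∀ᵐ x ∂(volume : Measure ℝ), x ∈ Set.Ioi (0:ℝ) → fS x = x ^ k * Hfun k x := by
    filter_upwards [haeq] with x hx hx0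
    rw [Set.mem_Ioi] at hx0
    rw [if_pos hx0] at hx
    rw [show dNfun k x = x ^ k * Hfun k x from if_pos hx0] at hx
    have hpos : 0 < x ^ k * Hfun k x := mul_pos (pow_pos hx0 k) ((Hfun_props k).2 x).1
    by_cases hfs : 0 < fS x
    · exact (ENNReal.ofReal_eq_ofReal_iff hfs.le hpos.le).1 hx
    · exfalso
      rw [ENNReal.ofReal_eq_zero.2 (not_lt.1 hfs)] at hx
      exact absurd hx.symm (by simp [ENNReal.ofReal_eq_zero, not_le.2 hpos])
  set gk : ℝ → ℝ := fun x => x ^ k * Hfun k x with hgk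
  have hgkc : Continuous gk := (continuous_pow k).mul (Hfun_props k).1
  have heq : ∀ x ∈ Set.Ioi (0:ℝ), fS x = gk x := by
    intro x0 hx0
    rw [Set.mem_Ioi] at hx0
    set E : Set ℝ := {x | x ∈ Set.Ioi (0:ℝ) ∧ fS x = gk x} with hE
    have hcl : x0 ∈ closure E := by
      by_contra hcon
      rw [Metric.mem_closure_iff] at hcon
      push_neg at hcon
      obtain ⟨ε, hε, hdist⟩ := hcon
      have hδpos : 0 < min ε x0 := lt_min hε hx0
      have hnull : volume {x : ℝ | ¬ (x ∈ Set.Ioi (0:ℝ) → fS x = x ^ k * Hfun k x)} = 0 :=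
        ae_iff.1 hae2
      have hsub : Set.Ioo (x0 - min ε x0) (x0 + min ε x0)
          ⊆ {x : ℝ | ¬ (x ∈ Set.Ioi (0:ℝ) → fS x = x ^ k * Hfun k x)} := by
        intro y hy
        simp only [Set.mem_setOf_eq, Classical.not_imp]
        have hy0 : 0 < y := by
          have h1 := hy.1
          have h2 : min ε x0 ≤ x0 := min_le_right _ _
          linarith
        refine ⟨Set.mem_Ioi.2 hy0, fun heqy => ?_⟩
        have hyE : y ∈ E := ⟨Set.mem_Ioi.2 hy0, heqy⟩
        have hd := hdist y hyE
        rw [Real.dist_eq] at hd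
        have h1 := hy.1
        have h2 := hy.2
        have h3 : min ε x0 ≤ ε := min_le_left _ _
        have h4 : |x0 - y| < min ε x0 := abs_sub_lt_iff.2 ⟨by linarith, by linarith⟩
        linarith
      have hle : (volume : Measure ℝ) (Set.Ioo (x0 - min ε x0) (x0 + min ε x0))
          ≤ (volume : Measure ℝ) {x : ℝ | ¬ (x ∈ Set.Ioi (0:ℝ) → fS x = x ^ k * Hfun k x)} :=
        measure_mono hsub
      rw [hnull, Real.volume_Ioo] at hle
      have : x0 + min ε x0 - (x0 - min ε x0) = 2 * min ε x0 := by ring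
      rw [this] at hle
      simp only [nonpos_iff_eq_zero, ENNReal.ofReal_eq_zero] at hle
      linarith
    have hne : (nhdsWithin x0 E).NeBot := mem_closure_iff_nhdsWithin_neBot.1 hcl
    have hsubE : E ⊆ Set.Ioi 0 := fun x hx => hx.1
    have h1 : Tendsto fS (nhdsWithin x0 E) (nhds (fS x0)) :=
      ((hfS_cont x0 (Set.mem_Ioi.2 hx0)).mono hsubE).tendsto
    have h3 : Tendsto gk (nhdsWithin x0 E) (nhds (gk x0)) :=
      hgkc.continuousAt.continuousWithinAt.tendsto
    have h2 : Tendsto fS (nhdsWithin x0 E) (nhds (gk x0)) := by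
      refine Tendsto.congr' ?_ h3
      filter_upwards [self_mem_nhdsWithin] with x hx
      exact hx.2.symm
    exact tendsto_nhds_unique h1 h2
  have hlim : Tendsto (Hfun k) (nhdsWithin 0 (Set.Ioi 0)) (nhds (Hfun k 0)) :=
    ((Hfun_props k).1.tendsto 0).mono_left nhdsWithin_le_nhds
  have hval : Hfun k 0
      = (2 / Real.pi) ^ (((k+1 : ℕ) : ℝ) / 2) / (Nat.factorial ((k+1) - 1) : ℝ) := by
    rw [Hfun_zero]
    have h1 : (k+1 : ℕ) - 1 = k := by omega
    rw [h1]
    congr 1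
    rw [Real.sqrt_eq_rpow, ← Real.rpow_natCast ((2/Real.pi) ^ ((1:ℝ)/2)) (k+1),
      ← Real.rpow_mul (by positivity)]
    congr 1
    push_cast
    ring
  rw [hval] at hlim
  refine Tendsto.congr' ?_ hlim
  filter_upwards [self_mem_nhdsWithin] with s hs
  rw [Set.mem_Ioi] at hs
  have hcast : ((k+1 : ℕ) : ℝ) - 1 = (k : ℕ) := by push_cast; ring
  rw [hcast, Real.rpow_natCast, heq s (Set.mem_Ioi.2 hs), hgk]
  field_simp
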